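/- Let λ be infinite, k ≥ 1, n = 2k, 𝒳 = {x ∈ ^λ2 : |x⁻¹({1})| ≤ k}, and B the algebra of subsets of 𝒳 generated by Z_α = {x ∈ 𝒳 : x(α)=1}. Then B contains no uncountable (n+1)-independent family; i.e., ind_{n+1}(B) = ℵ₀. -/

import Mathlib

open Cardinal

/-- The elements of the Boolean subalgebra generated by `S`. -/
inductive GenBA {A : Type u} [BooleanAlgebra A] (S : Set A) : A → Prop
  | base {a : A} : a ∈ S → GenBA S a
  | bot : GenBA S ⊥
  | compl {a : A} : GenBA S a → GenBA S aᶜ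
  | inf {a b : A} : GenBA S a → GenBA S b → GenBA S (a ⊓ b)

/-- A set `Y` in a Boolean algebra is `m`-independent if every Boolean
combination of `m` distinct members of `Y` (with arbitrary complementation
pattern) is nonzero. -/
def NIndepSet {A : Type u} [BooleanAlgebra A] (m : ℕ) (Y : Set A) : Prop :=
  ∀ s t : Finset A, ↑s ⊆ Y → ↑t ⊆ Y → Disjoint s t → s.card + t.card = m →
    (s.inf id) ⊓ (t.inf fun b => bᶜ) ≠ ⊥

open Classical in
lemma delta_system {α : Type*} {ι : Type*} :
    ∀ (s : ℕ) (f : ι → Finset α) (T : Set ι), T.Infinite → (∀ i ∈ T, (f i).card ≤ s) →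
    ∃ (T' : Set ι) (R : Finset α), T' ⊆ T ∧ T'.Infinite ∧
      ∀ i ∈ T', ∀ j ∈ T', i ≠ j → f i ∩ f j = R := by
  intro s
  induction s with
  | zero =>
    intro f T hT hcard
    refine ⟨T, ∅, subset_rfl, hT, fun i hi j hj hij => ?_⟩
    have : f i = ∅ := Finset.card_eq_zero.mp (Nat.le_zero.mp (hcard i hi))
    simp [this]
  | succ s ih =>
    intro f T hT hcard
    by_cases h : ∃ a, {i | i ∈ T ∧ a ∈ f i}.Infinite
    · obtain ⟨a, ha⟩ := h
      set T₁ : Set ι := {i | i ∈ T ∧ a ∈ f i} with hT₁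
      have hsub : T₁ ⊆ T := fun i hi => hi.1
      have hcard' : ∀ i ∈ T₁, ((f i).erase a).card ≤ s := by
        intro i hi
        have h1 := Finset.card_erase_of_mem hi.2
        have h2 := hcard i hi.1
        omega
      obtain ⟨T', R', hT'sub, hT'inf, hR'⟩ := ih (fun i => (f i).erase a) T₁ ha hcard'
      refine ⟨T', insert a R', hT'sub.trans hsub, hT'inf, fun i hi j hj hij => ?_⟩
      have hai : a ∈ f i := (hT'sub hi).2
      have haj : a ∈ f j := (hT'sub hj).2
      have := hR' i hi j hj hij
      ext x
      simp only [Finset.mem_inter, Finset.mem_insert]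
      constructor
      · rintro ⟨hxi, hxj⟩
        by_cases hxa : x = a
        · exact Or.inl hxa
        · refine Or.inr ?_
          have hmem : x ∈ (f i).erase a ∩ (f j).erase a := by
            simp [Finset.mem_erase, hxa, hxi, hxj]
          rwa [hR' i hi j hj hij] at hmem
      · rintro (rfl | hx)
        · exact ⟨hai, haj⟩
        · rw [← hR' i hi j hj hij] at hx
          simp only [Finset.mem_inter, Finset.mem_erase] at hx
          exact ⟨hx.1.2, hx.2.2⟩
    · push_neg at h
      have hfin : ∀ a : α, {i | i ∈ T ∧ a ∈ f i}.Finite :=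
        fun a => h a
      -- Zorn's lemma: maximal pairwise f-disjoint subfamily
      obtain ⟨m, -, hm⟩ := zorn_subset_nonempty
        {P : Set ι | P ⊆ T ∧ ∀ i ∈ P, ∀ j ∈ P, i ≠ j → f i ∩ f j = ∅}
        (fun c hc hchain hne => by
          refine ⟨⋃₀ c, ⟨?_, ?_⟩, fun s hs => Set.subset_sUnion_of_mem hs⟩
          · exact Set.sUnion_subset fun P hP => (hc hP).1
          · intro i hi j hj hij
            obtain ⟨P, hP, hiP⟩ := hi
            obtain ⟨Q, hQ, hjQ⟩ := hj
            rcases hchain.total hP hQ with hPQ | hQP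
            · exact (hc hQ).2 i (hPQ hiP) j hjQ hij
            · exact (hc hP).2 i hiP j (hQP hjQ) hij)
        ∅ ⟨Set.empty_subset _, by simp⟩
      by_cases hminf : m.Infinite
      · exact ⟨m, ∅, hm.prop.1, hminf, hm.prop.2⟩
      · exfalso
        have hmfin : m.Finite := Set.not_infinite.mp hminf
        have hcover : T ⊆ m ∪ ⋃ i ∈ m, ⋃ a ∈ f i, {j | j ∈ T ∧ a ∈ f j} := by
          intro j hj
          by_cases hjm : j ∈ m
          · exact Or.inl hjm
          · by_cases hconf : ∃ i ∈ m, (f i ∩ f j).Nonempty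
            · obtain ⟨i, hi, ⟨a, haa⟩⟩ := hconf
              simp only [Finset.mem_inter] at haa
              refine Or.inr ?_
              simp only [Set.mem_iUnion]
              exact ⟨i, hi, a, haa.1, hj, haa.2⟩
            · push_neg at hconf
              have : insert j m ∈ {P : Set ι | P ⊆ T ∧
                  ∀ i ∈ P, ∀ j ∈ P, i ≠ j → f i ∩ f j = ∅} := by
                constructor
                · exact Set.insert_subset hj hm.prop.1
                · intro i hi i' hi' hii'
                  rcases hi with rfl | hi <;> rcases hi' with rfl | hi'
                  · exact absurd rfl hii'
                  · rw [Finset.inter_comm]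
                    exact (hconf i' hi')
                  · exact (hconf i hi)
                  · exact hm.prop.2 i hi i' hi' hii'
              have hle := hm.2 this (Set.subset_insert j m)
              exact absurd (hle (Set.mem_insert j m)) hjm
        have : T.Finite := by
          refine Set.Finite.subset ?_ hcover
          refine hmfin.union ?_
          refine Set.Finite.biUnion hmfin (fun i _ => ?_)
          exact Set.Finite.biUnion (f i).finite_toSet (fun a _ => hfin a)
        exact hT this

variable {L : Type u} {k : ℕ}

/-- b depends only on coordinates in F -/
def SuppOn (k : ℕ) (F : Finset L) (b : Set {s : Finset L // s.card ≤ k}) : Prop :=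
  ∀ x y : {s : Finset L // s.card ≤ k}, (∀ β ∈ F, (β ∈ x.1 ↔ β ∈ y.1)) → (x ∈ b ↔ y ∈ b)

lemma gen_supported {b : Set {s : Finset L // s.card ≤ k}}
    (hb : GenBA (Set.range fun β : L => {s : {s : Finset L // s.card ≤ k} | β ∈ s.1}) b) :
    ∃ F : Finset L, SuppOn k F b := by
  classical
  induction hb with
  | base h =>
    obtain ⟨β, rfl⟩ := h
    exact ⟨{β}, fun x y hxy => by simpa using hxy β (Finset.mem_singleton_self β)⟩
  | bot => exact ⟨∅, fun x y _ => Iff.rfl⟩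
  | compl _ ih =>
    obtain ⟨F, hF⟩ := ih
    exact ⟨F, fun x y hxy => not_congr (hF x y hxy)⟩
  | inf _ _ ih₁ ih₂ =>
    obtain ⟨F₁, hF₁⟩ := ih₁
    obtain ⟨F₂, hF₂⟩ := ih₂
    refine ⟨F₁ ∪ F₂, fun x y hxy => ?_⟩
    exact and_congr (hF₁ x y fun β hβ => hxy β (Finset.mem_union_left _ hβ))
      (hF₂ x y fun β hβ => hxy β (Finset.mem_union_right _ hβ))

open Classical in
lemma core_contradiction {L : Type u} [Nonempty L] {k : ℕ} (hk : 1 ≤ k)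
    (Y : Set (Set {s : Finset L // s.card ≤ k}))
    (hindep : NIndepSet (2 * k + 1) Y)
    (u : Finset (Set {s : Finset L // s.card ≤ k})) (hu : ↑u ⊆ Y)
    (hcard : u.card = 2 * k + 1)
    (F : Set {s : Finset L // s.card ≤ k} → Finset L) (R : Finset L)
    (hsupp : ∀ b ∈ u, SuppOn k (F b) b)
    (hdelta : ∀ b ∈ u, ∀ b' ∈ u, b ≠ b' → F b ∩ F b' = R)
    (H : Finset L → Prop)
    (hH : ∀ b ∈ u, ∀ τ : Finset L, τ ⊆ R → ∀ hτ : τ.card ≤ k,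
      ((⟨τ, hτ⟩ : {s : Finset L // s.card ≤ k}) ∈ b ↔ H τ)) :
    False := by
  -- split u into P of size k and N of size k+1 (and vice versa)
  obtain ⟨P, hPu, hPcard⟩ := Finset.exists_subset_card_eq (show k ≤ u.card by omega)
  set N := u \ P with hN
  have hNu : N ⊆ u := Finset.sdiff_subset
  have hNcard : N.card = k + 1 := by
    rw [hN, Finset.card_sdiff_of_subset hPu, hcard, hPcard]; omega
  have hdisj : Disjoint P N := Finset.disjoint_sdiff
  -- generic analysis of a realizing point
  have analyze : ∀ (P' N' : Finset (Set {s : Finset L // s.card ≤ k})),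
      P' ⊆ u → N' ⊆ u → Disjoint P' N' → P'.card + N'.card = 2 * k + 1 →
      ∀ x : {s : Finset L // s.card ≤ k},
      (∀ b ∈ P', x ∈ b) → (∀ b ∈ N', x ∉ b) →
      -- conclusion: the "untouched" value is determined and the big side forces x∩R = ∅
      ((N'.card = k + 1 → ¬ H ∅) ∧ (P'.card = k + 1 → H ∅)) := by
    intro P' N' hP' hN' hPN hsum x hxP hxN
    set W : Finset L := x.1 with hW
    have hWk : W.card ≤ k := x.2
    -- untouched b: membership determined by H (x∩R)
    have untouched : ∀ b ∈ u, (W ∩ (F b \ R)) = ∅ →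
        (x ∈ b ↔ H (W ∩ R)) := by
      intro b hb hemp
      have hsub : W ∩ R ⊆ R := Finset.inter_subset_right
      have hcard' : (W ∩ R).card ≤ k :=
        le_trans (Finset.card_le_card Finset.inter_subset_left) hWk
      have step : x ∈ b ↔ (⟨W ∩ R, hcard'⟩ : {s : Finset L // s.card ≤ k}) ∈ b := by
        refine hsupp b hb x ⟨W ∩ R, hcard'⟩ ?_
        intro β hβ
        by_cases hβR : β ∈ R
        · simp [Finset.mem_inter, hβR, hW]
        · have hβ' : β ∈ F b \ R := Finset.mem_sdiff.mpr ⟨hβ, hβR⟩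
          constructor
          · intro hx
            exact absurd (Finset.mem_inter.mpr ⟨hx, hβ'⟩) (by rw [hW] at hemp; simp [hemp])
          · intro hx
            exact absurd (Finset.mem_inter.mp hx).2 hβR
      rw [step]
      exact hH b hb (W ∩ R) hsub hcard'
    -- witness function for touched sets
    set g : Set {s : Finset L // s.card ≤ k} → L := fun b =>
      if h : (W ∩ (F b \ R)).Nonempty then h.choose else Classical.arbitrary L with hg
    have hgmem : ∀ b, (W ∩ (F b \ R)).Nonempty → g b ∈ W ∩ (F b \ R) := by
      intro b h
      simp only [hg, dif_pos h]
      exact h.choose_spec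
    have hginj : ∀ b ∈ u, ∀ b' ∈ u, (W ∩ (F b \ R)).Nonempty →
        (W ∩ (F b' \ R)).Nonempty → g b = g b' → b = b' := by
      intro b hb b' hb' h h' heq
      by_contra hbb
      have h1 := hgmem b h
      have h2 := hgmem b' h'
      rw [heq] at h1
      have : g b' ∈ F b ∩ F b' := Finset.mem_inter.mpr
        ⟨(Finset.mem_sdiff.mp (Finset.mem_inter.mp h1).2).1,
         (Finset.mem_sdiff.mp (Finset.mem_inter.mp h2).2).1⟩
      rw [hdelta b hb b' hb' hbb] at this
      exact (Finset.mem_sdiff.mp (Finset.mem_inter.mp h1).2).2 this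
    -- a finset Q ⊆ u with all members touched injects into W \ R
    have count : ∀ Q : Finset (Set {s : Finset L // s.card ≤ k}), Q ⊆ u →
        (∀ b ∈ Q, (W ∩ (F b \ R)).Nonempty) → Q.card ≤ (W \ R).card := by
      intro Q hQ hQt
      refine Finset.card_le_card_of_injOn g ?_ ?_
      · intro b hb
        have := hgmem b (hQt b hb)
        rw [Finset.mem_inter, Finset.mem_sdiff] at this
        exact Finset.mem_sdiff.mpr ⟨this.1, this.2.2⟩
      · intro b hb b' hb' heq
        exact hginj b (hQ (by simpa using hb)) b' (hQ (by simpa using hb'))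
          (hQt b (by simpa using hb)) (hQt b' (by simpa using hb')) heq
    -- some member of a (k+1)-sized side is untouched
    have exists_untouched : ∀ Q : Finset (Set {s : Finset L // s.card ≤ k}), Q ⊆ u →
        Q.card = k + 1 → ∃ b ∈ Q, (W ∩ (F b \ R)) = ∅ := by
      intro Q hQ hQc
      by_contra hc
      push_neg at hc
      have : Q.card ≤ (W \ R).card := count Q hQ (fun b hb =>
        (hc b hb))
      have : (W \ R).card ≤ W.card := Finset.card_le_card (Finset.sdiff_subset)
      omega
    constructor
    · -- N' big: ¬ H ∅
      intro hN'c
      obtain ⟨b₀, hb₀N, hb₀un⟩ := exists_untouched N' hN' hN'c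
      have hnH : ¬ H (W ∩ R) := fun h =>
        (hxN b₀ hb₀N) ((untouched b₀ (hN' hb₀N) hb₀un).mpr h)
      -- all of P' touched
      have hPt : ∀ b ∈ P', (W ∩ (F b \ R)).Nonempty := by
        intro b hb
        rw [Finset.nonempty_iff_ne_empty]
        intro hemp
        exact hnH ((untouched b (hP' hb) hemp).mp (hxP b hb))
      have h1 : P'.card ≤ (W \ R).card := count P' hP' hPt
      have h2 : (W ∩ R).card + (W \ R).card = W.card := Finset.card_inter_add_card_sdiff W R
      have hP'c : P'.card = k := by omega
      have : (W ∩ R) = ∅ := Finset.card_eq_zero.mp (by omega)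
      rwa [this] at hnH
    · -- P' big: H ∅
      intro hP'c
      obtain ⟨b₀, hb₀P, hb₀un⟩ := exists_untouched P' hP' hP'c
      have hH' : H (W ∩ R) := (untouched b₀ (hP' hb₀P) hb₀un).mp (hxP b₀ hb₀P)
      have hNt : ∀ b ∈ N', (W ∩ (F b \ R)).Nonempty := by
        intro b hb
        rw [Finset.nonempty_iff_ne_empty]
        intro hemp
        exact (hxN b hb) ((untouched b (hN' hb) hemp).mpr hH')
      have h1 : N'.card ≤ (W \ R).card := count N' hN' hNt
      have h2 : (W ∩ R).card + (W \ R).card = W.card := Finset.card_inter_add_card_sdiff W R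
      have hN'c : N'.card = k := by omega
      have : (W ∩ R) = ∅ := Finset.card_eq_zero.mp (by omega)
      rwa [this] at hH'
  -- extract realizing points for both patterns
  have getx : ∀ (P' N' : Finset (Set {s : Finset L // s.card ≤ k})),
      P' ⊆ u → N' ⊆ u → Disjoint P' N' → P'.card + N'.card = 2 * k + 1 →
      ∃ x : {s : Finset L // s.card ≤ k}, (∀ b ∈ P', x ∈ b) ∧ (∀ b ∈ N', x ∉ b) := by
    intro P' N' hP' hN' hPN hsum
    have hne := hindep P' N' (fun b hb => hu (hP' hb)) (fun b hb => hu (hN' hb)) hPN hsum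
    obtain ⟨x, hx⟩ := Set.nonempty_iff_ne_empty.mpr (by simpa using hne)
    simp only [Finset.inf_set_eq_iInter, Set.mem_inter_iff, Set.mem_iInter, id,
      Set.mem_compl_iff] at hx
    exact ⟨x, fun b hb => hx.1 b hb, fun b hb => hx.2 b hb⟩
  have hsum1 : P.card + N.card = 2 * k + 1 := by omega
  obtain ⟨x₁, hx₁P, hx₁N⟩ := getx P N hPu hNu hdisj hsum1
  obtain ⟨x₂, hx₂P, hx₂N⟩ := getx N P hNu hPu hdisj.symm (by omega)
  have h₁ := (analyze P N hPu hNu hdisj hsum1 x₁ hx₁P hx₁N).1 hNcard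
  have h₂ := (analyze N P hNu hPu hdisj.symm (by omega) x₂ hx₂P hx₂N).2 hNcard
  exact h₁ h₂

open Classical in
lemma upper_bound {L : Type u} [Infinite L] {k : ℕ} (hk : 1 ≤ k)
    (Y : Set (Set {s : Finset L // s.card ≤ k}))
    (hgen : ∀ b ∈ Y, GenBA (Set.range fun β : L =>
      {s : {s : Finset L // s.card ≤ k} | β ∈ s.1}) b)
    (hindep : NIndepSet (2 * k + 1) Y) : #(↥Y) ≤ Cardinal.aleph0 := by
  by_contra hY
  rw [Cardinal.mk_le_aleph0_iff, Set.countable_coe_iff] at hY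
  -- choose supports
  have hF : ∀ b : Set {s : Finset L // s.card ≤ k}, ∃ F : Finset L,
      b ∈ Y → SuppOn k F b := by
    intro b
    by_cases hb : b ∈ Y
    · obtain ⟨F, hF⟩ := gen_supported (hgen b hb)
      exact ⟨F, fun _ => hF⟩
    · exact ⟨∅, fun h => absurd h hb⟩
  choose F hFsupp using hF
  -- some card-fiber is uncountable, hence infinite
  have : ∃ n : ℕ, ¬ {b | b ∈ Y ∧ (F b).card = n}.Countable := by
    by_contra hc
    push_neg at hc
    refine hY (Set.Countable.mono ?_ (Set.countable_iUnion hc))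
    intro b hb
    exact Set.mem_iUnion.mpr ⟨(F b).card, hb, rfl⟩
  obtain ⟨n, hn⟩ := this
  set T : Set (Set {s : Finset L // s.card ≤ k}) := {b | b ∈ Y ∧ (F b).card = n} with hTdef
  have hTY : T ⊆ Y := fun b hb => hb.1
  have hTinf : T.Infinite := fun hfin => hn hfin.countable
  -- Δ-system
  obtain ⟨T', R, hT'T, hT'inf, hΔ⟩ := delta_system n F T hTinf (fun i hi => le_of_eq hi.2)
  -- pigeonhole on behaviour over R
  set pt : Finset L → {s : Finset L // s.card ≤ k} := fun τ =>
    if h : τ.card ≤ k then ⟨τ, h⟩ else ⟨∅, by simp⟩ with hpt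
  set ψ : Set {s : Finset L // s.card ≤ k} → (↥R.powerset → Bool) := fun b τ =>
    decide (pt τ.1 ∈ b) with hψ
  have : ∃ v : ↥R.powerset → Bool, ¬ {b | b ∈ T' ∧ ψ b = v}.Finite := by
    by_contra hc
    push_neg at hc
    refine hT'inf (Set.Finite.subset (Set.finite_iUnion (fun v => hc v)) ?_)
    intro b hb
    exact Set.mem_iUnion.mpr ⟨ψ b, hb, rfl⟩
  obtain ⟨v, hv⟩ := this
  have hvinf : {b | b ∈ T' ∧ ψ b = v}.Infinite := hv
  obtain ⟨u, huv, hucard⟩ := hvinf.exists_subset_card_eq (2 * k + 1)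
  have huT' : ∀ b ∈ u, b ∈ T' := fun b hb => (huv hb).1
  have huY : (↑u : Set _) ⊆ Y := fun b hb => hTY (hT'T (huT' b hb))
  refine core_contradiction hk Y hindep u huY hucard F R
    (fun b hb => hFsupp b (huY hb))
    (fun b hb b' hb' hbb => hΔ b (huT' b hb) b' (huT' b' hb') hbb)
    (fun τ => if h : τ ∈ R.powerset then v ⟨τ, h⟩ = true else True)
    ?_
  intro b hb τ hτR hτk
  have hmem : τ ∈ R.powerset := Finset.mem_powerset.mpr hτR
  have hptτ : pt τ = ⟨τ, hτk⟩ := dif_pos hτk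
  have hψb : ψ b = v := (huv hb).2
  have key : decide (pt τ ∈ b) = v ⟨τ, hmem⟩ := by rw [← hψb]
  simp only [dif_pos hmem, ← key, hptτ, decide_eq_true_iff]

lemma genba_top {A : Type u} [BooleanAlgebra A] (S : Set A) : GenBA S ⊤ := by
  have := GenBA.compl (GenBA.bot (S := S))
  rwa [compl_bot] at this

lemma genba_sup {A : Type u} [BooleanAlgebra A] {S : Set A} {a b : A}
    (ha : GenBA S a) (hb : GenBA S b) : GenBA S (a ⊔ b) := by
  have := GenBA.compl (GenBA.inf (GenBA.compl ha) (GenBA.compl hb))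
  rwa [compl_inf, compl_compl, compl_compl] at this

lemma genba_finset_inf {A : Type u} [BooleanAlgebra A] {S : Set A} {ι : Type*}
    [DecidableEq ι] (F : Finset ι) (f : ι → A) (hf : ∀ i ∈ F, GenBA S (f i)) :
    GenBA S (F.inf f) := by
  induction F using Finset.induction_on with
  | empty => simpa using genba_top S
  | @insert a G hni ih =>
    rw [Finset.inf_insert]
    exact GenBA.inf (hf a (Finset.mem_insert_self a G))
      (ih fun i hi => hf i (Finset.mem_insert_of_mem hi))

lemma genba_finset_sup {A : Type u} [BooleanAlgebra A] {S : Set A} {ι : Type*}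
    [DecidableEq ι] (F : Finset ι) (f : ι → A) (hf : ∀ i ∈ F, GenBA S (f i)) :
    GenBA S (F.sup f) := by
  induction F using Finset.induction_on with
  | empty => simpa using GenBA.bot
  | @insert a G hni ih =>
    rw [Finset.sup_insert]
    exact genba_sup (hf a (Finset.mem_insert_self a G))
      (ih fun i hi => hf i (Finset.mem_insert_of_mem hi))

open Classical in
lemma lower_bound {L : Type u} [Infinite L] {k : ℕ} (hk : 1 ≤ k) (n : ℕ) :
    ∃ Y : Set (Set {s : Finset L // s.card ≤ k}),
      (∀ b ∈ Y, GenBA (Set.range fun β : L =>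
        {s : {s : Finset L // s.card ≤ k} | β ∈ s.1}) b) ∧
      NIndepSet (2 * k + 1) Y ∧ #(↥Y) = (n : Cardinal.{u}) := by
  set Z : L → Set {s : Finset L // s.card ≤ k} :=
    fun β => {s : {s : Finset L // s.card ≤ k} | β ∈ s.1} with hZ
  -- an injection from (Finset (Fin n)) × Fin k into L
  obtain ⟨e, he⟩ := exists_injective_nat (Finset (Fin n) × Fin k)
  set ι : Finset (Fin n) × Fin k → L := fun p => Infinite.natEmbedding L (e p) with hι
  have hιinj : Function.Injective ι :=
    fun p q h => he ((Infinite.natEmbedding L).injective h)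
  -- the k-element sets
  set xs : Finset (Fin n) → Finset L :=
    fun T => Finset.univ.image fun j : Fin k => ι (T, j) with hxs
  have hxcard : ∀ T, (xs T).card = k := by
    intro T
    rw [hxs]
    rw [Finset.card_image_of_injective _ (fun j j' h => by
      have := hιinj h; exact (Prod.mk.injEq _ _ _ _ ▸ this).2)]
    simp
  set p : Finset (Fin n) → {s : Finset L // s.card ≤ k} :=
    fun T => ⟨xs T, le_of_eq (hxcard T)⟩ with hp
  have hxdisj : ∀ T T', T ≠ T' → ∀ a, a ∈ xs T → a ∉ xs T' := by
    intro T T' hTT' a haT haT'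
    rw [hxs] at haT haT'
    simp only [Finset.mem_image, Finset.mem_univ, true_and] at haT haT'
    obtain ⟨j, hj⟩ := haT
    obtain ⟨j', hj'⟩ := haT'
    rw [← hj'] at hj
    exact hTT' ((Prod.mk.injEq _ _ _ _ ▸ hιinj hj).1)
  have hpinj : Function.Injective p := by
    intro T T' h
    by_contra hTT'
    have hx : xs T = xs T' := congrArg Subtype.val h
    have hne : (xs T).Nonempty := by
      rw [← Finset.card_pos, hxcard]; omega
    obtain ⟨a, ha⟩ := hne
    exact hxdisj T T' hTT' a ha (hx ▸ ha)
  -- singleton characterization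
  have hsingle : ∀ T (z : {s : Finset L // s.card ≤ k}),
      z ∈ (xs T).inf Z ↔ z = p T := by
    intro T z
    rw [Finset.inf_set_eq_iInter]
    simp only [Set.mem_iInter]
    constructor
    · intro h
      have hsub : xs T ⊆ z.1 := fun a ha => h a ha
      have : xs T = z.1 := Finset.eq_of_subset_of_card_le hsub (by rw [hxcard]; exact z.2)
      exact Subtype.ext this.symm
    · rintro rfl a ha
      exact ha
  -- the independent family
  set b : Fin n → Set {s : Finset L // s.card ≤ k} :=
    fun i => (Finset.univ.powerset.filter (fun T : Finset (Fin n) => i ∈ T)).sup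
      (fun T => (xs T).inf Z) with hb
  have hmemb : ∀ i (z : {s : Finset L // s.card ≤ k}),
      z ∈ b i ↔ ∃ T, i ∈ T ∧ z = p T := by
    intro i z
    simp only [hb]
    rw [Finset.sup_set_eq_biUnion]
    simp only [Set.mem_iUnion, Finset.mem_filter, Finset.mem_powerset]
    constructor
    · rintro ⟨T, ⟨-, hiT⟩, hz⟩
      exact ⟨T, hiT, (hsingle T z).mp hz⟩
    · rintro ⟨T, hiT, rfl⟩
      exact ⟨T, ⟨Finset.subset_univ T, hiT⟩, (hsingle T _).mpr rfl⟩
  have hbinj : Function.Injective b := by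
    intro i i' h
    have h1 : p {i} ∈ b i := (hmemb i _).mpr ⟨{i}, Finset.mem_singleton_self i, rfl⟩
    rw [h] at h1
    obtain ⟨T, hiT, hpT⟩ := (hmemb i' _).mp h1
    have : T = {i} := (hpinj hpT).symm
    rw [this, Finset.mem_singleton] at hiT
    exact hiT.symm
  refine ⟨Set.range b, ?_, ?_, ?_⟩
  · rintro c ⟨i, rfl⟩
    refine genba_finset_sup _ _ fun T _ => genba_finset_inf _ _ fun β _ => ?_
    exact GenBA.base ⟨β, rfl⟩
  · intro s t hs ht hdisj hsum
    set T₀ : Finset (Fin n) := Finset.univ.filter (fun i => b i ∈ s) with hT₀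
    have hmem : p T₀ ∈ (s.inf id) ⊓ (t.inf fun c => cᶜ) := by
      constructor
      · rw [Finset.inf_set_eq_iInter]
        simp only [Set.mem_iInter, id]
        intro c hc
        obtain ⟨i, rfl⟩ := hs hc
        refine (hmemb i _).mpr ⟨T₀, ?_, rfl⟩
        rw [hT₀, Finset.mem_filter]
        exact ⟨Finset.mem_univ i, hc⟩
      · rw [Finset.inf_set_eq_iInter]
        simp only [Set.mem_iInter, Set.mem_compl_iff]
        intro c hc
        obtain ⟨i, rfl⟩ := ht hc
        intro hcon
        obtain ⟨T, hiT, hpT⟩ := (hmemb i _).mp hcon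
        have hTT : T = T₀ := hpinj hpT.symm
        rw [hTT, hT₀, Finset.mem_filter] at hiT
        exact Finset.disjoint_left.mp hdisj hiT.2 hc
    intro hbot
    rw [hbot] at hmem
    exact hmem
  · have := Cardinal.mk_range_eq_lift (f := b) hbinj
    rw [Cardinal.mk_fin, Cardinal.lift_natCast] at this
    rw [← this, Cardinal.lift_id]

theorem stmt9 {L : Type u} [Infinite L] (k : ℕ) (hk : 1 ≤ k) :
    sSup {c : Cardinal.{u} |
      ∃ Y : Set (Set {s : Finset L // s.card ≤ k}),
        (∀ b ∈ Y, GenBA (Set.range fun β : L =>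
          {s : {s : Finset L // s.card ≤ k} | β ∈ s.1}) b) ∧
        NIndepSet (2 * k + 1) Y ∧ #Y = c} = ℵ₀ := by
  set S := {c : Cardinal.{u} |
      ∃ Y : Set (Set {s : Finset L // s.card ≤ k}),
        (∀ b ∈ Y, GenBA (Set.range fun β : L =>
          {s : {s : Finset L // s.card ≤ k} | β ∈ s.1}) b) ∧
        NIndepSet (2 * k + 1) Y ∧ #Y = c} with hS
  have hbdd : BddAbove S := by
    refine ⟨#(Set {s : Finset L // s.card ≤ k}), ?_⟩
    rintro c ⟨Y, -, -, rfl⟩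
    exact Cardinal.mk_set_le Y
  apply le_antisymm
  · refine csSup_le ?_ ?_
    · obtain ⟨Y, h1, h2, h3⟩ := lower_bound (L := L) hk 0
      exact ⟨0, Y, h1, h2, by simpa using h3⟩
    · rintro c ⟨Y, hgen, hind, rfl⟩
      exact upper_bound hk Y hgen hind
  · rw [Cardinal.aleph0_le]
    intro m
    obtain ⟨Y, h1, h2, h3⟩ := lower_bound (L := L) hk m
    exact le_csSup hbdd ⟨Y, h1, h2, h3⟩
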